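/- A norm ⦀·⦀ on ℝ^d is orthant-strictly monotonic if and only if it is strictly increasing with the coordinate subspaces, i.e., for every x ∈ ℝ^d and all subsets J ⊊ K ⊆ {1,…,d}, if x_J ≠ x_K then ⦀x_J⦀ < ⦀x_K⦀. -/

import Mathlib

open Finset Set

namespace OSMPaper

variable {d : ℕ}

/-- Standard inner product on `ℝ^d = Fin d → ℝ`. -/
def dot (x y : Fin d → ℝ) : ℝ := ∑ i, x i * y i

/-- `N` is a norm on `ℝ^d`. -/
def IsNorm (N : (Fin d → ℝ) → ℝ) : Prop :=
  (∀ x, 0 ≤ N x) ∧ (∀ x, N x = 0 ↔ x = 0) ∧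
  (∀ (c : ℝ) (x : Fin d → ℝ), N (c • x) = |c| * N x) ∧
  (∀ x y, N (x + y) ≤ N x + N y)

/-- `proj K x = x_K`, the vector coinciding with `x` on `K` and zero outside `K`. -/
def proj (K : Finset (Fin d)) (x : Fin d → ℝ) : Fin d → ℝ :=
  fun i => if i ∈ K then x i else 0

/-- The coordinate subspace `ℝ_K`. -/
def coordSubspace (K : Finset (Fin d)) : Set (Fin d → ℝ) :=
  {x | ∀ j, j ∉ K → x j = 0}

/-- Orthant-monotonic norm. -/
def OrthantMonotonic (N : (Fin d → ℝ) → ℝ) : Prop :=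
  ∀ x x' : Fin d → ℝ, (∀ i, |x i| ≤ |x' i|) → (∀ i, 0 ≤ x i * x' i) → N x ≤ N x'

/-- Orthant-strictly monotonic norm. -/
def OrthantStrictlyMonotonic (N : (Fin d → ℝ) → ℝ) : Prop :=
  ∀ x x' : Fin d → ℝ, (∀ i, |x i| ≤ |x' i|) → (∃ j, |x j| < |x' j|) →
    (∀ i, 0 ≤ x i * x' i) → N x < N x'

/-- Dual norm `⦀y⦀⋆ = sup_{N x ≤ 1} ⟨x, y⟩`. -/
noncomputable def dualNorm (N : (Fin d → ℝ) → ℝ) (y : Fin d → ℝ) : ℝ :=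
  sSup {r | ∃ x, N x ≤ 1 ∧ r = dot x y}

/-- Support function of a set `S`. -/
noncomputable def suppFn (S : Set (Fin d → ℝ)) (y : Fin d → ℝ) : ℝ :=
  sSup {r | ∃ x ∈ S, r = dot x y}

/-- Generalized top-`k` norm associated with the source norm `N`. -/
noncomputable def topNorm (N : (Fin d → ℝ) → ℝ) (k : ℕ) (x : Fin d → ℝ) : ℝ :=
  sSup {r | ∃ K : Finset (Fin d), K.card ≤ k ∧ r = N (proj K x)}

/-- Generalized `k`-support norm: the dual norm of the generalized top-`k` norm. -/
noncomputable def supportNorm (N : (Fin d → ℝ) → ℝ) (k : ℕ) : (Fin d → ℝ) → ℝ :=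
  dualNorm (topNorm N k)

/-- The ℓ0 pseudonorm: the number of nonzero components. -/
noncomputable def l0 (x : Fin d → ℝ) : ℕ := Set.ncard {i | x i ≠ 0}

/-- `x` is an extreme point of the convex set `C`. -/
def ExtremePt (C : Set (Fin d → ℝ)) (x : Fin d → ℝ) : Prop :=
  x ∈ C ∧ ∀ y ∈ C, ∀ z ∈ C, ∀ t : ℝ, 0 < t → t < 1 →
    x = t • y + (1 - t) • z → y = x ∧ z = x

lemma proj_univ (z : Fin d → ℝ) : proj Finset.univ z = z := by
  funext i; simp [proj]

/-- Key step: replacing one coordinate by a smaller one (same sign) does not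
increase the norm, strictly if the coordinate strictly decreases in absolute
value. -/
lemma step_le (N : (Fin d → ℝ) → ℝ) (hN : IsNorm N)
    (H : ∀ (x : Fin d → ℝ) (J K : Finset (Fin d)), J ⊂ K →
        proj J x ≠ proj K x → N (proj J x) < N (proj K x))
    (z : Fin d → ℝ) (i : Fin d) (a : ℝ) (h1 : |a| ≤ |z i|) (h2 : 0 ≤ a * z i) :
    N (Function.update z i a) ≤ N z ∧ (|a| < |z i| → N (Function.update z i a) < N z) := by
  obtain ⟨hN0, hNz, hNs, hNt⟩ := hN
  by_cases hz : z i = 0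
  · have ha : a = 0 := by
      have := h1; rw [hz, abs_zero] at this
      exact abs_eq_zero.mp (le_antisymm this (abs_nonneg a))
    constructor
    · rw [ha, ← hz, Function.update_eq_self]
    · intro h; rw [hz, abs_zero] at h; exact absurd (abs_nonneg a) (not_le.mpr h)
  · set μ := a / z i with hμ
    have hμ0 : 0 ≤ μ := by
      have : μ = (a * z i) / (z i ^ 2) := by rw [hμ, pow_two, mul_div_mul_right _ _ hz]
      rw [this]; positivity
    have hμabs : |μ| ≤ 1 := by
      rw [hμ, abs_div]
      exact div_le_one_of_le₀ h1 (abs_nonneg _)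
    have hμ1 : μ ≤ 1 := le_trans (le_abs_self μ) hμabs
    set w := proj (Finset.univ.erase i) z with hw
    have hdec : Function.update z i a = μ • z + (1 - μ) • w := by
      funext k
      by_cases hk : k = i
      · subst hk
        simp only [Function.update_self, Pi.add_apply, Pi.smul_apply, smul_eq_mul, hw, proj,
          Finset.mem_erase, ne_eq, not_true_eq_false, false_and, if_false, mul_zero, add_zero]
        rw [hμ, div_mul_cancel₀ _ hz]
      · simp only [Function.update_of_ne hk, Pi.add_apply, Pi.smul_apply, smul_eq_mul, hw, proj,
          Finset.mem_erase, hk, ne_eq, not_false_eq_true, true_and, Finset.mem_univ, if_true]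
        ring
    have hwz : w ≠ z := by
      intro hc
      have : w i = z i := by rw [hc]
      simp [hw, proj] at this
      exact hz this.symm
    have hwle : N w < N z := by
      have := H z (Finset.univ.erase i) Finset.univ
        (Finset.erase_ssubset (Finset.mem_univ i))
        (by rw [proj_univ]; exact hwz)
      rwa [proj_univ] at this
    have hbound : N (Function.update z i a) ≤ μ * N z + (1 - μ) * N w := by
      rw [hdec]
      calc N (μ • z + (1 - μ) • w) ≤ N (μ • z) + N ((1 - μ) • w) := hNt _ _
        _ = |μ| * N z + |1 - μ| * N w := by rw [hNs, hNs]
        _ = μ * N z + (1 - μ) * N w := by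
            rw [abs_of_nonneg hμ0, abs_of_nonneg (by linarith)]
    constructor
    · calc N (Function.update z i a) ≤ μ * N z + (1 - μ) * N w := hbound
        _ ≤ μ * N z + (1 - μ) * N z := by nlinarith [hwle.le]
        _ = N z := by ring
    · intro hstrict
      have hμlt : μ < 1 := by
        have : |μ| < 1 := by
          rw [hμ, abs_div]
          exact (div_lt_one (abs_pos.mpr hz)).mpr hstrict
        exact lt_of_le_of_lt (le_abs_self μ) this
      calc N (Function.update z i a) ≤ μ * N z + (1 - μ) * N w := hbound
        _ < μ * N z + (1 - μ) * N z := by nlinarith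
        _ = N z := by ring

/-- a norm is orthant-strictly monotonic iff it is strictly
increasing with the coordinate subspaces. -/
theorem orthantStrictlyMonotonic_iff_strictly_increasing_with_coord_subspaces
    (hd : 0 < d) (N : (Fin d → ℝ) → ℝ) (hN : IsNorm N) :
    OrthantStrictlyMonotonic N ↔
      ∀ (x : Fin d → ℝ) (J K : Finset (Fin d)), J ⊂ K →
        proj J x ≠ proj K x → N (proj J x) < N (proj K x) := by
  constructor
  · intro hOSM x J K hJK hne
    apply hOSM
    · intro i
      by_cases hi : i ∈ J
      · have hiK : i ∈ K := hJK.1 hi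
        simp [proj, hi, hiK]
      · simp [proj, hi, abs_nonneg]
    · obtain ⟨j, hj⟩ := Function.ne_iff.mp hne
      have hjJ : j ∉ J := by
        intro hjJ
        exact hj (by simp [proj, hjJ, hJK.1 hjJ])
      refine ⟨j, ?_⟩
      simp only [proj, hjJ, if_false] at hj ⊢
      rcases Finset.decidableMem j K with h | h
      · simp [h] at hj
      · simp only [h, if_true] at hj ⊢
        rw [abs_zero]
        exact abs_pos.mpr (Ne.symm hj)
    · intro i
      by_cases hi : i ∈ J
      · have hiK : i ∈ K := hJK.1 hi
        simp only [proj, hi, hiK, if_true]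
        exact mul_self_nonneg _
      · simp [proj, hi]
  · intro H x x' hle ⟨j, hj⟩ hsign
    -- mix S : take x on S, x' off S
    set mix : Finset (Fin d) → (Fin d → ℝ) :=
      fun S i => if i ∈ S then x i else x' i with hmix
    have key : ∀ S : Finset (Fin d), N (mix (insert j S)) < N x' := by
      intro S
      induction S using Finset.induction_on with
      | empty =>
        have heq : mix (insert j ∅) = Function.update x' j (x j) := by
          funext k
          by_cases hk : k = j <;>
            simp [hmix, Function.update_apply, hk]
        rw [heq]
        exact (step_le N hN H x' j (x j) (hle j) (hsign j)).2 hj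
      | @insert i S hi ih =>
        by_cases hij : i = j
        · subst hij
          rwa [Finset.insert_comm, Finset.insert_idem]
        · have hiS : i ∉ insert j S := by
            simp [hij, hi]
          have heq : mix (insert j (insert i S)) =
              Function.update (mix (insert j S)) i (x i) := by
            funext k
            by_cases hk : k = i
            · subst hk
              simp [hmix, Function.update_self, hij]
            · simp only [Function.update_of_ne hk, hmix]
              have : k ∈ insert j (insert i S) ↔ k ∈ insert j S := by
                simp [Finset.mem_insert, hk]
              by_cases hkm : k ∈ insert j S
              · simp [this.mpr hkm, hkm]
              · simp [(not_congr this).mpr hkm, hkm]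
          have hzi : (mix (insert j S)) i = x' i := by
            simp [hmix, hiS]
          have hstep := (step_le N hN H (mix (insert j S)) i (x i)
            (by rw [hzi]; exact hle i) (by rw [hzi]; exact hsign i)).1
          rw [heq]
          exact lt_of_le_of_lt hstep ih
    have := key (Finset.univ : Finset (Fin d))
    have huniv : insert j (Finset.univ : Finset (Fin d)) = Finset.univ := by simp
    rw [huniv] at this
    have hxeq : mix (Finset.univ : Finset (Fin d)) = x := by
      funext k; simp [hmix]
    rwa [hxeq] at this

end OSMPaper
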